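/- Consider the pPCA model on ℝ^q (latent) and ℝ^p (observed): prior p(z) = Normal(0, I_q) and conditional likelihood p(x|z) = Normal(Wz + μ, σ²I_p), with W a p×q real matrix, μ ∈ ℝ^p, σ > 0. Let M = WᵀW + σ²I_q. Then for every x ∈ ℝ^p, the posterior distribution of z given x is the Gaussian distribution p(z|x) = Normal(M⁻¹Wᵀ(x − μ), σ²M⁻¹); in particular M is invertible. -/

import Mathlib

open MeasureTheory Matrix

/-- Density at `z` of the Gaussian distribution `Normal(m, S)` on `ℝ^d`
(with positive-definite covariance matrix `S`). -/
noncomputable def gaussPdf {d : ℕ} (m : Fin d → ℝ) (S : Matrix (Fin d) (Fin d) ℝ)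
    (z : Fin d → ℝ) : ℝ :=
  (2 * Real.pi) ^ (-(d : ℝ) / 2) * S.det ^ (-(1 : ℝ) / 2) *
    Real.exp (-((z - m) ⬝ᵥ S⁻¹.mulVec (z - m)) / 2)

theorem integral_comp_mulVec {d : ℕ} (B : Matrix (Fin d) (Fin d) ℝ) (hB : B.det ≠ 0)
    (g : (Fin d → ℝ) → ℝ) (hg : Continuous g) :
    ∫ z : Fin d → ℝ, g (B.mulVec z) = |B.det|⁻¹ * ∫ u : Fin d → ℝ, g u := by
  have hdet : LinearMap.det (Matrix.toLin' B) ≠ 0 := by rwa [LinearMap.det_toLin']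
  have hmap := Real.map_linearMap_volume_pi_eq_smul_volume_pi hdet
  have hcont : Continuous (Matrix.toLin' B) := LinearMap.continuous_on_pi _
  have h1 : ∫ z, g z ∂((volume : Measure (Fin d → ℝ)).map (Matrix.toLin' B))
      = ∫ z : Fin d → ℝ, g (B.mulVec z) := by
    rw [integral_map hcont.aemeasurable hg.aestronglyMeasurable]
    simp [Matrix.toLin'_apply]
  rw [← h1, hmap, integral_smul_measure, LinearMap.det_toLin']
  simp [ENNReal.toReal_ofReal (abs_nonneg _), abs_inv]

theorem integral_std_gauss (d : ℕ) :
    ∫ u : Fin d → ℝ, Real.exp (-(u ⬝ᵥ u) / 2) = (2 * Real.pi) ^ ((d : ℝ) / 2) := by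
  have h : ∀ u : Fin d → ℝ, Real.exp (-(u ⬝ᵥ u) / 2) = ∏ i, Real.exp (-(1/2) * (u i) ^ 2) := by
    intro u
    rw [← Real.exp_sum]
    congr 1
    simp [dotProduct, Finset.sum_div, ← Finset.sum_neg_distrib]
    congr 1
    ext i
    ring
  simp_rw [h]
  rw [integral_fintype_prod_volume_eq_pow (ι := Fin d) (fun x : ℝ => Real.exp (-(1/2) * x ^ 2)),
    integral_gaussian]
  rw [Fintype.card_fin]
  rw [show Real.pi / (1/2) = 2 * Real.pi by ring, Real.sqrt_eq_rpow,
    ← Real.rpow_natCast ((2*Real.pi) ^ ((1:ℝ)/2)) d, ← Real.rpow_mul (by positivity)]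
  ring_nf

theorem continuous_stdg {d : ℕ} : Continuous (fun u : Fin d → ℝ => Real.exp (-(u ⬝ᵥ u) / 2)) := by
  apply Real.continuous_exp.comp
  apply Continuous.div_const
  apply Continuous.neg
  simp only [dotProduct]
  exact continuous_finset_sum _ fun i _ => (continuous_apply i).mul (continuous_apply i)

open scoped MatrixOrder in
theorem integral_gaussPdf {d : ℕ} (m : Fin d → ℝ) (S : Matrix (Fin d) (Fin d) ℝ)
    (hS : S.PosDef) : ∫ z : Fin d → ℝ, gaussPdf m S z = 1 := by
  classical
  have hA : S⁻¹.PosDef := hS.inv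
  set B := CFC.sqrt S⁻¹ with hBdef
  have hBB : B * B = S⁻¹ := CFC.sqrt_mul_sqrt_self _ hA.posSemidef.nonneg
  have hBsym : Bᵀ = B := by
    have := (Matrix.nonneg_iff_posSemidef.mp (CFC.sqrt_nonneg S⁻¹)).1
    rwa [Matrix.IsHermitian, Matrix.conjTranspose_eq_transpose_of_trivial] at this
  have hdetS : 0 < S.det := hS.det_pos
  have hdetB2 : B.det ^ 2 = S.det⁻¹ := by
    rw [sq, ← Matrix.det_mul, hBB, Matrix.det_nonsing_inv, Ring.inverse_eq_inv']
  have hdetB : B.det ≠ 0 := by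
    intro h
    rw [h] at hdetB2
    simp at hdetB2
    exact hdetS.ne' (by simpa using hdetB2.symm)
  have hquad : ∀ v : Fin d → ℝ, v ⬝ᵥ S⁻¹.mulVec v = (B.mulVec v) ⬝ᵥ (B.mulVec v) := by
    intro v
    conv_lhs => rw [← hBB, ← Matrix.mulVec_mulVec, Matrix.dotProduct_mulVec,
      ← Matrix.mulVec_transpose, hBsym]
  -- translate
  have htrans : ∫ z : Fin d → ℝ, Real.exp (-((z - m) ⬝ᵥ S⁻¹.mulVec (z - m)) / 2)
      = ∫ z : Fin d → ℝ, Real.exp (-(z ⬝ᵥ S⁻¹.mulVec z) / 2) := by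
    rw [← integral_sub_right_eq_self
      (fun z : Fin d → ℝ => Real.exp (-(z ⬝ᵥ S⁻¹.mulVec z) / 2)) m]
  have hint : ∫ z : Fin d → ℝ, Real.exp (-(z ⬝ᵥ S⁻¹.mulVec z) / 2)
      = |B.det|⁻¹ * (2 * Real.pi) ^ ((d : ℝ) / 2) := by
    simp_rw [hquad]
    rw [integral_comp_mulVec B hdetB _ continuous_stdg, integral_std_gauss]
  have habs : |B.det|⁻¹ = S.det ^ ((1 : ℝ) / 2) := by
    rw [← Real.sqrt_sq_eq_abs, hdetB2, Real.sqrt_inv, inv_inv, Real.sqrt_eq_rpow]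
  unfold gaussPdf
  rw [integral_const_mul, htrans, hint, habs]
  have hpi : (0:ℝ) < 2 * Real.pi := by positivity
  calc (2 * Real.pi) ^ (-(d:ℝ) / 2) * S.det ^ (-(1:ℝ) / 2) *
        (S.det ^ ((1:ℝ) / 2) * (2 * Real.pi) ^ ((d:ℝ) / 2))
      = ((2 * Real.pi) ^ (-(d:ℝ) / 2) * (2 * Real.pi) ^ ((d:ℝ) / 2)) *
        (S.det ^ (-(1:ℝ) / 2) * S.det ^ ((1:ℝ) / 2)) := by ring
    _ = 1 := by
        rw [← Real.rpow_add hpi, ← Real.rpow_add hdetS,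
          show -(d:ℝ) / 2 + (d:ℝ) / 2 = 0 by ring, show -(1:ℝ) / 2 + (1:ℝ) / 2 = 0 by ring,
          Real.rpow_zero, Real.rpow_zero, mul_one]

theorem posDef_smul' {n : ℕ} {M : Matrix (Fin n) (Fin n) ℝ} (hM : M.PosDef) {c : ℝ}
    (hc : 0 < c) : (c • M).PosDef := by
  refine ⟨?_, fun v hv => ?_⟩
  · have h1 := hM.1
    simp only [Matrix.IsHermitian, Matrix.conjTranspose_smul, star_trivial] at h1 ⊢
    rw [h1]
  · simpa [Finsupp.mul_sum, mul_assoc, mul_left_comm] using smul_pos hc (hM.2 hv)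

theorem complete_square {q : ℕ} (M : Matrix (Fin q) (Fin q) ℝ) (hM : Mᵀ = M)
    (hMu : IsUnit M) (b z : Fin q → ℝ) :
    (z - M⁻¹.mulVec b) ⬝ᵥ M.mulVec (z - M⁻¹.mulVec b)
      = z ⬝ᵥ M.mulVec z - 2 * (b ⬝ᵥ z) + b ⬝ᵥ M⁻¹.mulVec b := by
  have hMdet : IsUnit M.det := (Matrix.isUnit_iff_isUnit_det M).mp hMu
  have h1 : M.mulVec (M⁻¹.mulVec b) = b := by
    rw [Matrix.mulVec_mulVec, Matrix.mul_nonsing_inv _ hMdet, Matrix.one_mulVec]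
  have h2 : (M⁻¹.mulVec b) ⬝ᵥ M.mulVec z = b ⬝ᵥ z := by
    rw [Matrix.dotProduct_mulVec, ← Matrix.mulVec_transpose, hM, h1]
  have h3 : z ⬝ᵥ b = b ⬝ᵥ z := dotProduct_comm _ _
  have h4 : (M⁻¹.mulVec b) ⬝ᵥ b = b ⬝ᵥ M⁻¹.mulVec b := dotProduct_comm _ _
  rw [Matrix.mulVec_sub, dotProduct_sub, sub_dotProduct,
    sub_dotProduct, h1, h2, h3, h4]
  ring

theorem key_scalar (Kq Kp D1 D2 E1 E2 ER E3 : ℝ) (hD2 : D2 ≠ 0)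
    (hsplit : E1 * E2 = ER * E3) :
    Kq * 1 * E1 * (Kp * D1 * E2) = Kp * D1 * ER / D2 * (Kq * D2 * E3) := by
  field_simp
  linear_combination (Kq * Kp * D1) * hsplit

theorem pPCA_posterior
    (p q : ℕ) (W : Matrix (Fin p) (Fin q) ℝ) (μ : Fin p → ℝ) (σ : ℝ) (hσ : 0 < σ) :
    IsUnit (Wᵀ * W + σ ^ 2 • (1 : Matrix (Fin q) (Fin q) ℝ)) ∧
    ∀ (x : Fin p → ℝ) (z : Fin q → ℝ),
      gaussPdf 0 1 z * gaussPdf (W.mulVec z + μ) (σ ^ 2 • 1) x /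
          (∫ z' : Fin q → ℝ,
            gaussPdf 0 1 z' * gaussPdf (W.mulVec z' + μ) (σ ^ 2 • 1) x) =
        gaussPdf
          ((Wᵀ * W + σ ^ 2 • (1 : Matrix (Fin q) (Fin q) ℝ))⁻¹.mulVec
            (Wᵀ.mulVec (x - μ)))
          (σ ^ 2 • (Wᵀ * W + σ ^ 2 • (1 : Matrix (Fin q) (Fin q) ℝ))⁻¹) z := by
  classical
  have hσ2 : (0:ℝ) < σ ^ 2 := by positivity
  set M : Matrix (Fin q) (Fin q) ℝ := Wᵀ * W + σ ^ 2 • 1 with hMdef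
  have hWtW : (Wᵀ * W).PosSemidef := by
    have := Matrix.posSemidef_conjTranspose_mul_self W
    rwa [Matrix.conjTranspose_eq_transpose_of_trivial] at this
  have hMpd : M.PosDef := Matrix.PosDef.posSemidef_add hWtW (posDef_smul' Matrix.PosDef.one hσ2)
  have hMu : IsUnit M := hMpd.isUnit
  have hMdetu : IsUnit M.det := (Matrix.isUnit_iff_isUnit_det M).mp hMu
  have hMsym : Mᵀ = M := by
    rw [hMdef, Matrix.transpose_add, Matrix.transpose_mul, Matrix.transpose_transpose,
      Matrix.transpose_smul, Matrix.transpose_one]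
  refine ⟨hMu, fun x z => ?_⟩
  set y : Fin p → ℝ := x - μ with hydef
  set b : Fin q → ℝ := Wᵀ *ᵥ y with hbdef
  set m' : Fin q → ℝ := M⁻¹ *ᵥ b with hm'def
  clear_value y b m'
  have hS'pd : (σ ^ 2 • M⁻¹ : Matrix (Fin q) (Fin q) ℝ).PosDef := posDef_smul' hMpd.inv hσ2
  have hinv1 : (σ ^ 2 • (1 : Matrix (Fin p) (Fin p) ℝ))⁻¹ = (σ ^ 2)⁻¹ • 1 := by
    apply Matrix.inv_eq_right_inv
    rw [Matrix.smul_mul, Matrix.mul_smul, smul_smul, one_mul,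
      mul_inv_cancel₀ hσ2.ne', one_smul]
  have hinv2 : (σ ^ 2 • M⁻¹ : Matrix (Fin q) (Fin q) ℝ)⁻¹ = (σ ^ 2)⁻¹ • M := by
    apply Matrix.inv_eq_right_inv
    rw [Matrix.smul_mul, Matrix.mul_smul, smul_smul, mul_inv_cancel₀ hσ2.ne',
      Matrix.nonsing_inv_mul _ hMdetu, one_smul]
  have hd2pos : (0:ℝ) < ((σ ^ 2 • M⁻¹ : Matrix (Fin q) (Fin q) ℝ)).det := hS'pd.det_pos
  have hD2ne : ((σ ^ 2 • M⁻¹ : Matrix (Fin q) (Fin q) ℝ)).det ^ (-(1:ℝ)/2) ≠ 0 :=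
    (Real.rpow_pos_of_pos hd2pos _).ne'
  set D : ℝ := (2 * Real.pi) ^ (-(p:ℝ)/2) *
      ((σ ^ 2 • (1 : Matrix (Fin p) (Fin p) ℝ)).det) ^ (-(1:ℝ)/2) *
      Real.exp (-((σ ^ 2)⁻¹ * (y ⬝ᵥ y - b ⬝ᵥ M⁻¹ *ᵥ b)) / 2) /
      ((σ ^ 2 • M⁻¹ : Matrix (Fin q) (Fin q) ℝ)).det ^ (-(1:ℝ)/2) with hDdef
  have hd1pos : (0:ℝ) < (σ ^ 2 • (1 : Matrix (Fin p) (Fin p) ℝ)).det := by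
    rw [Matrix.det_smul, Matrix.det_one, mul_one]
    positivity
  have hDpos : 0 < D := by
    apply div_pos _ (Real.rpow_pos_of_pos hd2pos _)
    have := Real.exp_pos (-((σ ^ 2)⁻¹ * (y ⬝ᵥ y - b ⬝ᵥ M⁻¹ *ᵥ b)) / 2)
    have h2π : (0:ℝ) < 2 * Real.pi := by positivity
    positivity
  have key : ∀ w : Fin q → ℝ,
      gaussPdf 0 1 w * gaussPdf (W *ᵥ w + μ) (σ ^ 2 • 1) x
        = D * gaussPdf m' (σ ^ 2 • M⁻¹) w := by
    intro w
    unfold gaussPdf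
    have h1inv : (1 : Matrix (Fin q) (Fin q) ℝ)⁻¹ = 1 := Matrix.inv_eq_right_inv (one_mul 1)
    rw [Matrix.det_one, h1inv, hinv1, hinv2]
    simp only [sub_zero, Matrix.one_mulVec, Real.one_rpow]
    have e0 : x - (W *ᵥ w + μ) = y - W *ᵥ w := by
      rw [hydef]; abel
    have e1 : (x - (W *ᵥ w + μ)) ⬝ᵥ ((σ ^ 2)⁻¹ • (1 : Matrix (Fin p) (Fin p) ℝ)) *ᵥ
        (x - (W *ᵥ w + μ)) = (σ ^ 2)⁻¹ * ((y - W *ᵥ w) ⬝ᵥ (y - W *ᵥ w)) := by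
      rw [e0, Matrix.smul_mulVec, Matrix.one_mulVec, dotProduct_smul, smul_eq_mul]
    have e2 : (w - m') ⬝ᵥ ((σ ^ 2)⁻¹ • M) *ᵥ (w - m')
        = (σ ^ 2)⁻¹ * ((w - m') ⬝ᵥ M *ᵥ (w - m')) := by
      rw [Matrix.smul_mulVec, dotProduct_smul, smul_eq_mul]
    have e3 : (w - m') ⬝ᵥ M *ᵥ (w - m')
        = w ⬝ᵥ M *ᵥ w - 2 * (b ⬝ᵥ w) + b ⬝ᵥ M⁻¹ *ᵥ b := by
      rw [hm'def]; exact complete_square M hMsym hMu b w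
    have e4 : w ⬝ᵥ M *ᵥ w = (W *ᵥ w) ⬝ᵥ (W *ᵥ w) + σ ^ 2 * (w ⬝ᵥ w) := by
      rw [hMdef, Matrix.add_mulVec, dotProduct_add, Matrix.smul_mulVec,
        Matrix.one_mulVec, dotProduct_smul, smul_eq_mul, ← Matrix.mulVec_mulVec,
        Matrix.dotProduct_mulVec, Matrix.vecMul_transpose]
    have e5 : (y - W *ᵥ w) ⬝ᵥ (y - W *ᵥ w)
        = y ⬝ᵥ y - 2 * (b ⬝ᵥ w) + (W *ᵥ w) ⬝ᵥ (W *ᵥ w) := by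
      have hyW : y ⬝ᵥ (W *ᵥ w) = b ⬝ᵥ w := by
        rw [hbdef, Matrix.dotProduct_mulVec, Matrix.mulVec_transpose]
      have hWy : (W *ᵥ w) ⬝ᵥ y = b ⬝ᵥ w := by rw [dotProduct_comm, hyW]
      rw [dotProduct_sub, sub_dotProduct, sub_dotProduct, hyW, hWy]
      ring
    have hsplit : Real.exp (-(w ⬝ᵥ w) / 2) *
        Real.exp (-((σ ^ 2)⁻¹ * ((y - W *ᵥ w) ⬝ᵥ (y - W *ᵥ w))) / 2)
        = Real.exp (-((σ ^ 2)⁻¹ * (y ⬝ᵥ y - b ⬝ᵥ M⁻¹ *ᵥ b)) / 2) *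
          Real.exp (-((w - m') ⬝ᵥ ((σ ^ 2)⁻¹ • M) *ᵥ (w - m')) / 2) := by
      rw [← Real.exp_add, ← Real.exp_add]
      congr 1
      rw [e2, e3, e4, e5]
      field_simp
      ring
    rw [e1, hDdef]
    exact key_scalar _ _ _ _ _ _ _ _ hD2ne hsplit
  simp_rw [key]
  rw [integral_const_mul, integral_gaussPdf m' _ hS'pd, mul_one,
    mul_div_cancel_left₀ _ hDpos.ne']
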